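/- For any convex body K in ℝ^d, the translational packing density satisfies δ_T(K) ≤ Vol(K)/Vol(DK), where DK = (1/2)(K - K) is the difference body. -/

import Mathlib

open MeasureTheory Filter Pointwise
open Set Metric
open scoped ENNReal Topology

section Aux
variable {E : Type*} [NormedAddCommGroup E] [NormedSpace ℝ E]

lemma neg_set_eq_smul' (s : Set E) : -s = (-1 : ℝ) • s := by
  simp [Set.neg_smul_set, ← Set.image_smul, Set.image_neg]

lemma interior_neg_set' (s : Set E) : interior (-s) = -interior s := by
  rw [neg_set_eq_smul', interior_smul₀ (by norm_num : (-1:ℝ) ≠ 0), ← neg_set_eq_smul']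

lemma interior_add_subset_interior_add {A B : Set E} (hA : Convex ℝ A) (hB : Convex ℝ B)
    (hA0 : (interior A).Nonempty) (hB0 : (interior B).Nonempty) :
    interior (A + B) ⊆ interior A + interior B := by
  obtain ⟨a₀, ha₀⟩ := hA0
  obtain ⟨b₀, hb₀⟩ := hB0
  intro x hx
  have hcont : Tendsto (fun t : ℝ => x + t • (x - (a₀ + b₀))) (𝓝[>] 0) (𝓝 x) := by
    have : Continuous (fun t : ℝ => x + t • (x - (a₀ + b₀))) :=
      continuous_const.add (continuous_id.smul continuous_const)
    have h0 := this.tendsto 0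
    simp only [zero_smul, add_zero] at h0
    exact h0.mono_left nhdsWithin_le_nhds
  have hev := hcont.eventually (isOpen_interior.mem_nhds hx)
  obtain ⟨t, hmem, ht⟩ := (hev.and self_mem_nhdsWithin).exists
  replace ht : (0:ℝ) < t := ht
  obtain ⟨a', ha', b', hb', hab'⟩ := interior_subset hmem
  have h1t : (0:ℝ) < 1 + t := by linarith
  have hαpos : (0:ℝ) < t / (1 + t) := by positivity
  have hβpos : (0:ℝ) < 1 / (1 + t) := by positivity
  have hab1 : t / (1 + t) + 1 / (1 + t) = 1 := by field_simp; ring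
  refine ⟨(t / (1 + t)) • a₀ + (1 / (1 + t)) • a',
    hA.combo_interior_self_mem_interior ha₀ ha' hαpos hβpos.le hab1,
    (t / (1 + t)) • b₀ + (1 / (1 + t)) • b',
    hB.combo_interior_self_mem_interior hb₀ hb' hαpos hβpos.le hab1, ?_⟩
  have heq : a' + b' = x + t • (x - (a₀ + b₀)) := hab'
  show (t / (1 + t)) • a₀ + (1 / (1 + t)) • a' + ((t / (1 + t)) • b₀ + (1 / (1 + t)) • b') = x
  have key : (t / (1 + t)) • a₀ + (1 / (1 + t)) • a' + ((t / (1 + t)) • b₀ + (1 / (1 + t)) • b')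
      = (t / (1 + t)) • (a₀ + b₀) + (1 / (1 + t)) • (a' + b') := by module
  rw [key, heq]
  have hne : (1 + t) ≠ 0 := ne_of_gt h1t
  match_scalars <;> field_simp <;> ring

end Aux

/-- The translational packing density of a body `K ⊆ ℝ^d`: the supremum, over all
countable packings by translates of `K` (pairwise disjoint interiors), of the upper
density `limsup_{r→∞} (Σᵢ Vol((vᵢ +ᵥ K) ∩ B(0,r))) / Vol(B(0,r))`. -/
noncomputable def transPackingDensity {d : ℕ} (K : Set (EuclideanSpace ℝ (Fin d))) : ℝ≥0∞ :=
  ⨆ (v : ℕ → EuclideanSpace ℝ (Fin d))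
    (_ : ∀ i j, i ≠ j → Disjoint (interior (v i +ᵥ K)) (interior (v j +ᵥ K))),
    limsup (fun r : ℝ =>
      (∑' i, volume ((v i +ᵥ K) ∩ Metric.closedBall 0 r)) /
        volume (Metric.closedBall (0 : EuclideanSpace ℝ (Fin d)) r)) atTop

/-- For any convex body `K` in `ℝ^d`, the translational packing density satisfies
`δ_T(K) ≤ Vol(K)/Vol(DK)`, where `DK = (1/2) • (K - K)` is the difference body. -/
theorem transPackingDensity_le_volume_ratio (d : ℕ)
    (K : Set (EuclideanSpace ℝ (Fin d)))
    (hKcompact : IsCompact K) (hKconv : Convex ℝ K)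
    (hKint : (interior K).Nonempty) :
    transPackingDensity K ≤ volume K / volume ((2⁻¹ : ℝ) • (K - K)) := by
  classical
  set DK : Set (EuclideanSpace ℝ (Fin d)) := (2⁻¹ : ℝ) • (K - K) with hDKdef
  obtain ⟨R, hR0, hKR⟩ : ∃ R : ℝ, 0 ≤ R ∧ K ⊆ Metric.closedBall 0 R := by
    obtain ⟨R, hKR⟩ := hKcompact.isBounded.subset_closedBall 0
    exact ⟨max R 0, le_max_right _ _,
      hKR.trans (Metric.closedBall_subset_closedBall (le_max_left _ _))⟩
  have hDKconv : Convex ℝ DK := (hKconv.sub hKconv).smul _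
  have hDKcomp : IsCompact DK := by
    rw [hDKdef, sub_eq_add_neg]
    exact (hKcompact.add hKcompact.neg).smul _
  have hDKR : DK ⊆ Metric.closedBall 0 R := by
    rintro x ⟨y, ⟨a, ha, b, hb, rfl⟩, rfl⟩
    rw [mem_closedBall_zero_iff]
    have ha' := mem_closedBall_zero_iff.1 (hKR ha)
    have hb' := mem_closedBall_zero_iff.1 (hKR hb)
    calc ‖(2⁻¹:ℝ) • (a - b)‖ = 2⁻¹ * ‖a - b‖ := by
          rw [norm_smul]; norm_num
      _ ≤ 2⁻¹ * (‖a‖ + ‖b‖) := by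
          gcongr; exact norm_sub_le a b
      _ ≤ R := by linarith
  have hnegKK : -(K - K) = K - K := by
    ext x
    simp only [Set.mem_neg, Set.mem_sub]
    constructor
    · rintro ⟨a, ha, b, hb, h⟩
      exact ⟨b, hb, a, ha, by rw [← neg_sub, h, neg_neg]⟩
    · rintro ⟨a, ha, b, hb, rfl⟩
      exact ⟨b, hb, a, ha, (neg_sub a b).symm⟩
  have hnegDK : -DK = DK := by
    rw [hDKdef, neg_set_eq_smul', smul_smul, show ((-1:ℝ) * 2⁻¹) = 2⁻¹ * (-1) by ring,
      ← smul_smul, ← neg_set_eq_smul', hnegKK]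
  have hDKDK : DK + DK = K - K := by
    rw [hDKdef, ← (hKconv.sub hKconv).add_smul (by norm_num : (0:ℝ) ≤ 2⁻¹) (by norm_num)]
    norm_num
  have hKK_int : interior (K - K) ⊆ interior K - interior K := by
    have h1 : interior (K + -K) ⊆ interior K + interior (-K) :=
      interior_add_subset_interior_add hKconv hKconv.neg hKint
        (by rw [interior_neg_set']; exact hKint.neg)
    rw [sub_eq_add_neg, sub_eq_add_neg, ← interior_neg_set']
    exact h1
  have hDKint : (interior DK).Nonempty := by
    obtain ⟨x₀, hx₀⟩ := hKint
    have hk₀ : x₀ ∈ K := interior_subset hx₀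
    have hopen : IsOpen (interior K + {-x₀}) := isOpen_interior.add_right
    have hsub : interior K + {-x₀} ⊆ K - K := by
      rintro z ⟨p, hp, m, hm, rfl⟩
      rw [Set.mem_singleton_iff] at hm
      exact ⟨p, interior_subset hp, x₀, hk₀, by rw [hm]; exact sub_eq_add_neg p x₀⟩
    have h0 : (0 : EuclideanSpace ℝ (Fin d)) ∈ interior (K - K) :=
      interior_maximal hsub hopen ⟨x₀, hx₀, -x₀, rfl, by abel_nf⟩
    rw [hDKdef, interior_smul₀ (by norm_num : (2⁻¹:ℝ) ≠ 0)]
    exact ⟨(2⁻¹:ℝ) • 0, Set.smul_mem_smul_set h0⟩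
  have hvolDK0 : volume DK ≠ 0 := by
    have : 0 < volume (interior DK) := isOpen_interior.measure_pos volume hDKint
    exact (this.trans_le (measure_mono interior_subset)).ne'
  have hvolDKtop : volume DK ≠ ⊤ := hDKcomp.measure_lt_top.ne
  set c : ℝ≥0∞ := volume K / volume DK with hc
  rw [transPackingDensity]
  refine iSup_le fun v => iSup_le fun hdisj => ?_
  -- DK interiors disjoint
  have hdisjDK : ∀ i j, i ≠ j →
      Disjoint (interior (v i +ᵥ DK)) (interior (v j +ᵥ DK)) := by
    intro i j hij
    rw [Set.disjoint_left]
    intro x hxi hxj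
    rw [interior_vadd] at hxi hxj
    obtain ⟨y₁, hy₁, rfl⟩ := hxi
    obtain ⟨y₂, hy₂, hy₂eq⟩ := hxj
    -- v i + y₁ = v j + y₂
    have hvj : v j + y₂ = v i + y₁ := hy₂eq
    have hdiff : v i - v j = y₂ - y₁ := by
      rw [sub_eq_sub_iff_add_eq_add, add_comm y₂]; exact hvj.symm
    have hmem : v i - v j ∈ interior (K - K) := by
      have hsub1 : interior DK - interior DK ⊆ K - K := by
        rw [← hDKDK, sub_eq_add_neg]
        apply Set.add_subset_add interior_subset
        intro z hz
        rw [Set.mem_neg] at hz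
        rw [← hnegDK, Set.mem_neg]
        exact interior_subset hz
      have hopen' : IsOpen (interior DK - interior DK) := by
        rw [sub_eq_add_neg]
        exact isOpen_interior.add_right
      exact interior_maximal hsub1 hopen' (hdiff ▸ ⟨y₂, hy₂, y₁, hy₁, rfl⟩)
    obtain ⟨p, hp, q, hq, hpq⟩ := hKK_int hmem
    have hpt : v i + q = v j + p :=
      ((sub_eq_sub_iff_add_eq_add.1 hpq).symm.trans (add_comm p (v j)))
    have h1 : v i + q ∈ interior (v i +ᵥ K) := by
      rw [interior_vadd]; exact ⟨q, hq, rfl⟩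
    have h2 : v i + q ∈ interior (v j +ᵥ K) := by
      rw [interior_vadd, hpt]; exact ⟨p, hp, rfl⟩
    exact Set.disjoint_left.1 (hdisj i j hij) h1 h2
  have hDKclosed : ∀ i, IsClosed (v i +ᵥ DK) := fun i => (hDKcomp.vadd (v i)).isClosed
  have hDKconv' : ∀ i, Convex ℝ (v i +ᵥ DK) := fun i => hDKconv.vadd (v i)
  have hDKsum : ∀ s : ℝ,
      (∑' i, volume ((v i +ᵥ DK) ∩ Metric.closedBall 0 s)) ≤
        volume (Metric.closedBall (0 : EuclideanSpace ℝ (Fin d)) s) := by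
    intro s
    have hper : ∀ i, volume ((v i +ᵥ DK) ∩ Metric.closedBall 0 s) ≤
        volume (interior (v i +ᵥ DK) ∩ Metric.closedBall 0 s) := by
      intro i
      have hsubset : (v i +ᵥ DK) ∩ Metric.closedBall 0 s ⊆
          (interior (v i +ᵥ DK) ∩ Metric.closedBall 0 s) ∪ frontier (v i +ᵥ DK) := by
        rintro x ⟨hx1, hx2⟩
        have hx3 : x ∈ interior (v i +ᵥ DK) ∪ frontier (v i +ᵥ DK) := by
          rw [← closure_eq_interior_union_frontier, (hDKclosed i).closure_eq]; exact hx1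
        rcases hx3 with h | h
        · exact Or.inl ⟨h, hx2⟩
        · exact Or.inr h
      calc volume ((v i +ᵥ DK) ∩ Metric.closedBall 0 s)
          ≤ volume ((interior (v i +ᵥ DK) ∩ Metric.closedBall 0 s) ∪ frontier (v i +ᵥ DK)) :=
            measure_mono hsubset
        _ ≤ volume (interior (v i +ᵥ DK) ∩ Metric.closedBall 0 s)
              + volume (frontier (v i +ᵥ DK)) := measure_union_le _ _
        _ = volume (interior (v i +ᵥ DK) ∩ Metric.closedBall 0 s) := by
            rw [(hDKconv' i).addHaar_frontier volume, add_zero]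
    calc (∑' i, volume ((v i +ᵥ DK) ∩ Metric.closedBall 0 s))
        ≤ ∑' i, volume (interior (v i +ᵥ DK) ∩ Metric.closedBall 0 s) :=
          ENNReal.tsum_le_tsum hper
      _ = volume (⋃ i, interior (v i +ᵥ DK) ∩ Metric.closedBall 0 s) := by
          rw [measure_iUnion
            (fun i j hij => (hdisjDK i j hij).mono Set.inter_subset_left Set.inter_subset_left)
            (fun i => isOpen_interior.measurableSet.inter measurableSet_closedBall)]
      _ ≤ volume (Metric.closedBall (0 : EuclideanSpace ℝ (Fin d)) s) :=
          measure_mono (Set.iUnion_subset fun i => Set.inter_subset_right)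
  have hKsum : ∀ r : ℝ,
      (∑' i, volume ((v i +ᵥ K) ∩ Metric.closedBall 0 r)) ≤
        c * volume (Metric.closedBall (0 : EuclideanSpace ℝ (Fin d)) (r + 2*R)) := by
    intro r
    have hper : ∀ i, volume ((v i +ᵥ K) ∩ Metric.closedBall 0 r) ≤
        c * volume ((v i +ᵥ DK) ∩ Metric.closedBall 0 (r + 2*R)) := by
      intro i
      rcases Set.eq_empty_or_nonempty ((v i +ᵥ K) ∩ Metric.closedBall 0 r) with he | hne
      · simp [he]
      obtain ⟨x, hxK, hxB⟩ := hne
      obtain ⟨k, hk, rfl⟩ := hxK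
      have hxB' : ‖v i + k‖ ≤ r := by
        have := mem_closedBall_zero_iff.1 hxB
        simpa [vadd_eq_add] using this
      have hvi : ‖v i‖ ≤ r + R := by
        have h2 : ‖k‖ ≤ R := mem_closedBall_zero_iff.1 (hKR hk)
        calc ‖v i‖ = ‖v i + k - k‖ := by rw [add_sub_cancel_right]
          _ ≤ ‖v i + k‖ + ‖k‖ := norm_sub_le _ _
          _ ≤ r + R := add_le_add hxB' h2
      have hsub : (v i +ᵥ DK) ⊆ Metric.closedBall 0 (r + 2*R) := by
        rintro y ⟨z, hz, rfl⟩
        rw [mem_closedBall_zero_iff]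
        have hz' := mem_closedBall_zero_iff.1 (hDKR hz)
        calc ‖v i +ᵥ z‖ = ‖v i + z‖ := by rw [vadd_eq_add]
          _ ≤ ‖v i‖ + ‖z‖ := norm_add_le _ _
          _ ≤ r + R + R := add_le_add hvi hz'
          _ = r + 2*R := by ring
      rw [Set.inter_eq_left.2 hsub, measure_vadd]
      calc volume ((v i +ᵥ K) ∩ Metric.closedBall 0 r) ≤ volume (v i +ᵥ K) :=
            measure_mono Set.inter_subset_left
        _ = volume K := measure_vadd _ _ _
        _ = c * volume DK := by rw [hc, ENNReal.div_mul_cancel hvolDK0 hvolDKtop]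
    calc (∑' i, volume ((v i +ᵥ K) ∩ Metric.closedBall 0 r))
        ≤ ∑' i, c * volume ((v i +ᵥ DK) ∩ Metric.closedBall 0 (r + 2*R)) :=
          ENNReal.tsum_le_tsum hper
      _ = c * ∑' i, volume ((v i +ᵥ DK) ∩ Metric.closedBall 0 (r + 2*R)) :=
          ENNReal.tsum_mul_left
      _ ≤ c * volume (Metric.closedBall (0:EuclideanSpace ℝ (Fin d)) (r + 2*R)) :=
          mul_le_mul_right (hDKsum _) c
  -- limsup step
  have hι0 : volume (Metric.ball (0 : EuclideanSpace ℝ (Fin d)) 1) ≠ 0 :=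
    (measure_ball_pos volume 0 one_pos).ne'
  have hιtop : volume (Metric.ball (0 : EuclideanSpace ℝ (Fin d)) 1) ≠ ⊤ :=
    measure_ball_lt_top.ne
  have hvolball : ∀ s : ℝ, 0 ≤ s →
      volume (Metric.closedBall (0 : EuclideanSpace ℝ (Fin d)) s)
        = ENNReal.ofReal (s ^ d) * volume (Metric.ball (0 : EuclideanSpace ℝ (Fin d)) 1) := by
    intro s hs
    rw [Measure.addHaar_closedBall volume 0 hs, finrank_euclideanSpace_fin]
  have hratio : Tendsto (fun r : ℝ =>
      volume (Metric.closedBall (0:EuclideanSpace ℝ (Fin d)) (r + 2*R)) /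
        volume (Metric.closedBall (0:EuclideanSpace ℝ (Fin d)) r)) atTop (𝓝 1) := by
    have heq : ∀ᶠ r : ℝ in atTop, ENNReal.ofReal (((r + 2*R)/r) ^ d) =
        volume (Metric.closedBall (0:EuclideanSpace ℝ (Fin d)) (r + 2*R)) /
          volume (Metric.closedBall (0:EuclideanSpace ℝ (Fin d)) r) := by
      filter_upwards [eventually_gt_atTop 0] with r hr
      rw [hvolball _ (by positivity), hvolball _ hr.le,
        ENNReal.mul_div_mul_right _ _ hι0 hιtop,
        ← ENNReal.ofReal_div_of_pos (by positivity), div_pow]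
    have hreal : Tendsto (fun r : ℝ => ((r + 2*R)/r) ^ d) atTop (𝓝 1) := by
      have h1 : Tendsto (fun r : ℝ => (r + 2*R)/r) atTop (𝓝 1) := by
        have heq2 : (fun r : ℝ => (1:ℝ) + 2*R/r) =ᶠ[atTop] fun r => (r + 2*R)/r := by
          filter_upwards [eventually_ne_atTop 0] with r hr
          field_simp
        have h2 : Tendsto (fun r : ℝ => (1:ℝ) + 2*R/r) atTop (𝓝 1) := by
          have h3 : Tendsto (fun r : ℝ => 2*R/r) atTop (𝓝 0) :=
            tendsto_const_nhds.div_atTop tendsto_id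
          simpa using tendsto_const_nhds.add h3
        exact h2.congr' heq2
      simpa using h1.pow d
    have h4 := ENNReal.tendsto_ofReal hreal
    simp only [ENNReal.ofReal_one] at h4
    exact h4.congr' heq
  have hfg : ∀ᶠ r : ℝ in atTop, (∑' i, volume ((v i +ᵥ K) ∩ Metric.closedBall 0 r)) /
      volume (Metric.closedBall (0:EuclideanSpace ℝ (Fin d)) r) ≤
      c * (volume (Metric.closedBall (0:EuclideanSpace ℝ (Fin d)) (r + 2*R)) /
        volume (Metric.closedBall (0:EuclideanSpace ℝ (Fin d)) r)) := by
    filter_upwards with r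
    rw [← mul_div_assoc]
    exact ENNReal.div_le_div_right (hKsum r) _
  have hglim : Tendsto (fun r : ℝ =>
      c * (volume (Metric.closedBall (0:EuclideanSpace ℝ (Fin d)) (r + 2*R)) /
        volume (Metric.closedBall (0:EuclideanSpace ℝ (Fin d)) r))) atTop (𝓝 c) := by
    have h5 := ENNReal.Tendsto.const_mul (a := c) hratio (Or.inl one_ne_zero)
    simpa using h5
  exact (limsup_le_limsup hfg).trans_eq hglim.limsup_eq
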